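/- Let N ≥ 1, let x_1 < … < x_N be real numbers and β ∈ ℝ^N, and suppose that Σ_{i=1}^N β_i x_i^m = ∫_ℝ y^m dγ(y) for every integer 0 ≤ m ≤ 2N − 1, where γ is the standard Gaussian measure on ℝ (mean 0, variance 1). Then (x, β) satisfies the stationary Gauss–Galerkin equations with drift a(y) = −y, diffusion b ≡ 1 and parameter σ = √2. (In particular, the Gauss–Hermite quadrature of the stationary Gaussian law of the Ornstein–Uhlenbeck process, whose nodes are the roots of the degree-N probabilists' Hermite polynomial, is a stationary solution of the Gauss–Galerkin equations.) -/

import Mathlib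

open Finset

/-- `l'_{ii} = ∑_{k≠i} 1/(x_i − x_k)`, the derivative of the `i`-th Lagrange basis
polynomial at its own node. -/
noncomputable def lpDiag {N : ℕ} (x : Fin N → ℝ) (i : Fin N) : ℝ :=
  ∑ k ∈ Finset.univ.erase i, 1 / (x i - x k)

/-- `l'_{ij} = (∏_{k≠j}(x_j − x_k)) / ((x_j − x_i)·∏_{k≠i}(x_i − x_k))` for `j ≠ i`,
the derivative of the `i`-th Lagrange basis polynomial at the node `x_j`. -/
noncomputable def lpOff {N : ℕ} (x : Fin N → ℝ) (i j : Fin N) : ℝ :=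
  (∏ k ∈ Finset.univ.erase j, (x j - x k)) /
    ((x j - x i) * ∏ k ∈ Finset.univ.erase i, (x i - x k))

/-- `l''_{ii} = (∑_{k≠i} 1/(x_i − x_k))² − ∑_{k≠i} 1/(x_i − x_k)²`, the second derivative
of the `i`-th Lagrange basis polynomial at its own node. -/
noncomputable def lppDiag {N : ℕ} (x : Fin N → ℝ) (i : Fin N) : ℝ :=
  (∑ k ∈ Finset.univ.erase i, 1 / (x i - x k)) ^ 2 -
    ∑ k ∈ Finset.univ.erase i, 1 / (x i - x k) ^ 2

/-- Right-hand side of the Gauss–Galerkin node equation (the `x`-equation):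
`β_i A_i + σ²(2 β_i b(x_i)² l'_{ii} + ∑_{j≠i} β_j b(x_j)² (x_j − x_i)(l'_{ij})²)`,
where `A_i` is the drift value at node `i` (possibly configuration dependent). -/
noncomputable def ggDriftRHS {N : ℕ} (A : Fin N → ℝ) (b : ℝ → ℝ) (σ : ℝ)
    (x β : Fin N → ℝ) (i : Fin N) : ℝ :=
  β i * A i + σ ^ 2 * (2 * β i * (b (x i)) ^ 2 * lpDiag x i +
    ∑ j ∈ Finset.univ.erase i, β j * (b (x j)) ^ 2 * (x j - x i) * (lpOff x i j) ^ 2)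

/-- Right-hand side of the Gauss–Galerkin weight equation (the `β`-equation):
`2 β_i A_i l'_{ii} + σ²(β_i b(x_i)²((l'_{ii})² + l''_{ii}) + ∑_{j≠i} β_j b(x_j)²(l'_{ij})²)`. -/
noncomputable def ggWeightRHS {N : ℕ} (A : Fin N → ℝ) (b : ℝ → ℝ) (σ : ℝ)
    (x β : Fin N → ℝ) (i : Fin N) : ℝ :=
  2 * β i * A i * lpDiag x i +
    σ ^ 2 * (β i * (b (x i)) ^ 2 * ((lpDiag x i) ^ 2 + lppDiag x i) +
      ∑ j ∈ Finset.univ.erase i, β j * (b (x j)) ^ 2 * (lpOff x i j) ^ 2)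

/-- The stationary Gauss–Galerkin equations with node-dependent drift values `A_i`. -/
def StationaryGGWithDrift {N : ℕ} (A : Fin N → ℝ) (b : ℝ → ℝ) (σ : ℝ)
    (x β : Fin N → ℝ) : Prop :=
  ∀ i, 0 = ggDriftRHS A b σ x β i ∧ 0 = ggWeightRHS A b σ x β i

/-- The stationary Gauss–Galerkin equations with drift `a : ℝ → ℝ`,
diffusion `b : ℝ → ℝ` and parameter `σ`. -/
def StationaryGG {N : ℕ} (a b : ℝ → ℝ) (σ : ℝ) (x β : Fin N → ℝ) : Prop :=
  StationaryGGWithDrift (fun i => a (x i)) b σ x β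

open MeasureTheory ProbabilityTheory

namespace GGaux

open Real Filter Topology Set
open scoped NNReal ENNReal

lemma norm_bound (m : ℕ) (y : ℝ) :
    ‖y ^ m * Real.exp (-y ^ 2 / 2)‖ ≤
      (m.factorial : ℝ) * Real.exp 1 * Real.exp (-(1/4) * y ^ 2) := by
  have h1 : |y| ^ m ≤ (m.factorial : ℝ) * Real.exp |y| := by
    have h := Real.pow_div_factorial_le_exp (x := |y|) (abs_nonneg y) m
    have hfac : (0:ℝ) < (m.factorial : ℝ) := by positivity
    calc |y| ^ m = (|y| ^ m / m.factorial) * m.factorial := by field_simp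
      _ ≤ Real.exp |y| * m.factorial := by
          apply mul_le_mul_of_nonneg_right h hfac.le
      _ = (m.factorial : ℝ) * Real.exp |y| := by ring
  have h2 : Real.exp |y| * Real.exp (-y ^ 2 / 2) ≤ Real.exp 1 * Real.exp (-(1/4) * y ^ 2) := by
    rw [← Real.exp_add, ← Real.exp_add]
    apply Real.exp_le_exp.2
    nlinarith [sq_nonneg (|y| - 2), sq_abs y]
  calc ‖y ^ m * Real.exp (-y ^ 2 / 2)‖ = |y| ^ m * Real.exp (-y ^ 2 / 2) := by
        rw [norm_mul, Real.norm_eq_abs, Real.norm_eq_abs, abs_pow,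
          abs_of_pos (Real.exp_pos _)]
    _ ≤ ((m.factorial : ℝ) * Real.exp |y|) * Real.exp (-y ^ 2 / 2) := by
        apply mul_le_mul_of_nonneg_right h1 (Real.exp_pos _).le
    _ = (m.factorial : ℝ) * (Real.exp |y| * Real.exp (-y ^ 2 / 2)) := by ring
    _ ≤ (m.factorial : ℝ) * (Real.exp 1 * Real.exp (-(1/4) * y ^ 2)) := by
        apply mul_le_mul_of_nonneg_left h2 (by positivity)
    _ = (m.factorial : ℝ) * Real.exp 1 * Real.exp (-(1/4) * y ^ 2) := by ring

lemma integrable_pow_gauss (m : ℕ) :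
    Integrable (fun y : ℝ => y ^ m * Real.exp (-y ^ 2 / 2)) := by
  have hmaj : Integrable (fun y : ℝ =>
      (m.factorial : ℝ) * Real.exp 1 * Real.exp (-(1/4) * y ^ 2)) :=
    (integrable_exp_neg_mul_sq (by norm_num : (0:ℝ) < 1/4)).const_mul _
  refine hmaj.mono' ?_ (ae_of_all _ (norm_bound m))
  exact (Continuous.mul (continuous_pow m)
    ((continuous_pow 2).neg.div_const 2).rexp).aestronglyMeasurable

lemma tendsto_majorant_atTop :
    Tendsto (fun y : ℝ => Real.exp (-(1/4) * y ^ 2)) atTop (nhds 0) := by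
  apply Real.tendsto_exp_atBot.comp
  have h : Tendsto (fun y : ℝ => y ^ 2) atTop atTop :=
    tendsto_pow_atTop (two_ne_zero)
  have h1 := h.const_mul_atTop (show (0:ℝ) < 1/4 by norm_num)
  have h2 := tendsto_neg_atTop_atBot.comp h1
  refine h2.congr fun y => ?_
  simp only [Function.comp_apply]
  ring

lemma tendsto_majorant_atBot :
    Tendsto (fun y : ℝ => Real.exp (-(1/4) * y ^ 2)) atBot (nhds 0) := by
  have h := tendsto_majorant_atTop.comp tendsto_neg_atBot_atTop
  refine h.congr fun y => ?_
  simp only [Function.comp_apply, neg_sq]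

lemma tendsto_pow_gauss_atTop (m : ℕ) :
    Tendsto (fun y : ℝ => y ^ m * Real.exp (-y ^ 2 / 2)) atTop (nhds 0) := by
  apply squeeze_zero_norm (norm_bound m)
  simpa using tendsto_majorant_atTop.const_mul ((m.factorial : ℝ) * Real.exp 1)

lemma tendsto_pow_gauss_atBot (m : ℕ) :
    Tendsto (fun y : ℝ => y ^ m * Real.exp (-y ^ 2 / 2)) atBot (nhds 0) := by
  apply squeeze_zero_norm (norm_bound m)
  simpa using tendsto_majorant_atBot.const_mul ((m.factorial : ℝ) * Real.exp 1)

lemma ibp (m : ℕ) :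
    ∫ y : ℝ, (y ^ (m + 1) * Real.exp (-y ^ 2 / 2)
      - (m : ℝ) * (y ^ (m - 1) * Real.exp (-y ^ 2 / 2))) = 0 := by
  set g : ℝ → ℝ := fun y => y ^ (m + 1) * Real.exp (-y ^ 2 / 2)
    - (m : ℝ) * (y ^ (m - 1) * Real.exp (-y ^ 2 / 2)) with hg
  set F : ℝ → ℝ := fun y => -(y ^ m * Real.exp (-y ^ 2 / 2)) with hF
  have hderiv : ∀ y : ℝ, HasDerivAt F (g y) y := by
    intro y
    have h1 : HasDerivAt (fun y : ℝ => -y ^ 2 / 2) (-y) y := by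
      have : HasDerivAt (fun x : ℝ => -x ^ 2 / 2) _ y := (hasDerivAt_pow 2 y).neg.div_const 2
      convert this using 1
      push_cast
      ring_nf
    have he : HasDerivAt (fun y : ℝ => Real.exp (-y ^ 2 / 2))
        (-y * Real.exp (-y ^ 2 / 2)) y := by
      simpa [mul_comm] using h1.exp
    have key := ((hasDerivAt_pow m y).mul he).neg
    have hval : g y = -((m : ℝ) * y ^ (m - 1) * Real.exp (-y ^ 2 / 2)
        + y ^ m * (-y * Real.exp (-y ^ 2 / 2))) := by
      show y ^ (m + 1) * Real.exp (-y ^ 2 / 2)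
          - (m : ℝ) * (y ^ (m - 1) * Real.exp (-y ^ 2 / 2)) = _
      rcases Nat.eq_zero_or_pos m with hm | hm
      · subst hm
        simp only [Nat.cast_zero, pow_one, pow_zero]
        ring
      · have hy1 : y ^ (m + 1) = y ^ m * y := pow_succ y m
        have hy2 : y ^ m = y ^ (m - 1) * y := by
          rw [← pow_succ]
          congr 1
          omega
        rw [hy1, hy2]
        ring
    rw [hval]
    exact key
  have hgint : Integrable g :=
    (integrable_pow_gauss (m + 1)).sub ((integrable_pow_gauss (m - 1)).const_mul _)
  have htop : Tendsto F atTop (nhds 0) := by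
    rw [hF]
    simpa using (tendsto_pow_gauss_atTop m).neg
  have hbot : Tendsto F atBot (nhds 0) := by
    rw [hF]
    simpa using (tendsto_pow_gauss_atBot m).neg
  have h1 : ∫ y in Ioi (0:ℝ), g y = 0 - F 0 :=
    integral_Ioi_of_hasDerivAt_of_tendsto (hderiv 0).continuousAt.continuousWithinAt
      (fun t _ => hderiv t) hgint.integrableOn htop
  have h2 : ∫ y in Iic (0:ℝ), g y = F 0 - 0 :=
    integral_Iic_of_hasDerivAt_of_tendsto (hderiv 0).continuousAt.continuousWithinAt
      (fun t _ => hderiv t) hgint.integrableOn hbot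
  have h3 := intervalIntegral.integral_Iic_add_Ioi (μ := volume) (b := (0:ℝ))
    hgint.integrableOn hgint.integrableOn
  rw [h1, h2] at h3
  rw [← h3]; ring

lemma integral_gauss_eq (f : ℝ → ℝ) :
    ∫ y, f y ∂(gaussianReal 0 1) = ∫ y, gaussianPDFReal 0 1 y * f y := by
  rw [gaussianReal_of_var_ne_zero 0 one_ne_zero]
  have hmeas : Measurable fun y => (gaussianPDFReal 0 1 y).toNNReal :=
    (measurable_gaussianPDFReal 0 1).real_toNNReal
  have hdens : (gaussianPDF 0 1) = fun y => (((gaussianPDFReal 0 1 y).toNNReal : ℝ≥0) : ℝ≥0∞) := by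
    funext y; rw [gaussianPDF, ENNReal.ofReal]
  rw [hdens, integral_withDensity_eq_integral_smul hmeas f]
  refine integral_congr_ae (ae_of_all _ fun y => ?_)
  simp only [NNReal.smul_def, smul_eq_mul]
  rw [Real.coe_toNNReal _ (gaussianPDFReal_nonneg 0 1 y)]

lemma mom_rec (m : ℕ) :
    ∫ y, y ^ (m + 1) ∂(gaussianReal 0 1)
      = (m : ℝ) * ∫ y, y ^ (m - 1) ∂(gaussianReal 0 1) := by
  have hpdf : ∀ y : ℝ, gaussianPDFReal 0 1 y = (Real.sqrt (2 * π))⁻¹ * Real.exp (-y ^ 2 / 2) := by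
    intro y
    rw [gaussianPDFReal]
    norm_num
  rw [integral_gauss_eq, integral_gauss_eq]
  simp only [hpdf]
  have e1 : ∀ k : ℕ, ∫ y : ℝ, (Real.sqrt (2 * π))⁻¹ * Real.exp (-y ^ 2 / 2) * y ^ k
      = (Real.sqrt (2 * π))⁻¹ * ∫ y : ℝ, y ^ k * Real.exp (-y ^ 2 / 2) := by
    intro k
    rw [← integral_const_mul]
    refine integral_congr_ae (ae_of_all _ fun y => ?_)
    ring
  rw [e1, e1]
  have h0 := ibp m
  have hsub := integral_sub (integrable_pow_gauss (m + 1))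
    ((integrable_pow_gauss (m - 1)).const_mul (m : ℝ))
  rw [integral_const_mul] at hsub
  rw [hsub] at h0
  have h4 : ∫ y : ℝ, y ^ (m + 1) * Real.exp (-y ^ 2 / 2)
      = (m : ℝ) * ∫ y : ℝ, y ^ (m - 1) * Real.exp (-y ^ 2 / 2) := by linarith
  rw [h4]; ring

lemma quad_zero {N : ℕ} (hN : 1 ≤ N) (x β : Fin N → ℝ)
    (hmom : ∀ m : ℕ, m ≤ 2 * N - 1 →
      ∑ i, β i * x i ^ m = ∫ y, y ^ m ∂(gaussianReal 0 1))
    (q : Polynomial ℝ) (hq : q.natDegree + 2 ≤ 2 * N) :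
    ∑ j, β j * ((Polynomial.derivative q).eval (x j) - x j * q.eval (x j)) = 0 := by
  set n := 2 * N - 1 with hn0
  have hn : q.natDegree < n := by omega
  have heval : ∀ t : ℝ, q.eval t = ∑ m ∈ Finset.range n, q.coeff m * t ^ m :=
    fun t => Polynomial.eval_eq_sum_range' hn t
  have hds : Polynomial.derivative q
      = ∑ m ∈ Finset.range n, Polynomial.monomial (m - 1) (q.coeff m * m) := by
    conv_lhs => rw [q.as_sum_range' n hn]
    rw [Polynomial.derivative_sum]
    refine Finset.sum_congr rfl fun m _ => ?_
    rw [Polynomial.derivative_monomial]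
  have hdeval : ∀ t : ℝ, (Polynomial.derivative q).eval t
      = ∑ m ∈ Finset.range n, q.coeff m * ((m : ℝ) * t ^ (m - 1)) := by
    intro t
    rw [hds, Polynomial.eval_finset_sum]
    refine Finset.sum_congr rfl fun m _ => ?_
    rw [Polynomial.eval_monomial]
    ring
  have key : ∀ m ∈ Finset.range n,
      ∑ j, β j * ((m : ℝ) * x j ^ (m - 1) - x j ^ (m + 1)) = 0 := by
    intro m hm
    rw [Finset.mem_range] at hm
    have h1 := hmom (m + 1) (by omega)
    have h2 := hmom (m - 1) (by omega)
    have h3 := mom_rec m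
    have hsum : ∑ j, β j * ((m : ℝ) * x j ^ (m - 1) - x j ^ (m + 1))
        = (m : ℝ) * (∑ j, β j * x j ^ (m - 1)) - ∑ j, β j * x j ^ (m + 1) := by
      rw [Finset.mul_sum, ← Finset.sum_sub_distrib]
      exact Finset.sum_congr rfl fun j _ => by ring
    rw [hsum, h1, h2, h3, sub_self]
  calc ∑ j, β j * ((Polynomial.derivative q).eval (x j) - x j * q.eval (x j))
      = ∑ j, ∑ m ∈ Finset.range n,
        q.coeff m * (β j * ((m : ℝ) * x j ^ (m - 1) - x j ^ (m + 1))) := by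
        refine Finset.sum_congr rfl fun j _ => ?_
        rw [hdeval, heval]
        simp only [Finset.mul_sum]
        rw [← Finset.sum_sub_distrib, Finset.mul_sum]
        refine Finset.sum_congr rfl fun m _ => ?_
        ring
    _ = ∑ m ∈ Finset.range n, q.coeff m
        * ∑ j, β j * ((m : ℝ) * x j ^ (m - 1) - x j ^ (m + 1)) := by
        rw [Finset.sum_comm]
        exact Finset.sum_congr rfl fun m _ => by rw [Finset.mul_sum]
    _ = 0 := by
        refine Finset.sum_eq_zero fun m hm => ?_
        rw [key m hm, mul_zero]

lemma deriv_prod_linear {ι : Type*} [DecidableEq ι] (s : Finset ι) (v : ι → ℝ) :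
    Polynomial.derivative (∏ k ∈ s, (Polynomial.X - Polynomial.C (v k)))
      = ∑ k ∈ s, ∏ l ∈ s.erase k, (Polynomial.X - Polynomial.C (v l)) := by
  classical
  refine Finset.induction_on s (by simp) ?_
  intro a s ha ih
  rw [Finset.prod_insert ha, Polynomial.derivative_mul, Polynomial.derivative_X_sub_C,
    one_mul, ih, Finset.sum_insert ha, Finset.erase_insert ha, Finset.mul_sum]
  congr 1
  refine Finset.sum_congr rfl fun k hk => ?_
  have hak : a ≠ k := fun h => ha (h ▸ hk)
  rw [Finset.erase_insert_of_ne hak,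
    Finset.prod_insert (fun h => ha (Finset.mem_of_mem_erase h))]

end GGaux

open Polynomial in
/-- **Gauss–Hermite quadrature is a stationary Gauss–Galerkin solution for the
Ornstein–Uhlenbeck process.** If the `N`-point configuration `(x, β)` with ordered nodes
reproduces the moments of the standard Gaussian measure up to order `2N − 1`, then it
satisfies the stationary Gauss–Galerkin equations with drift `a(y) = −y`, diffusion
`b ≡ 1` and parameter `σ = √2`. -/
theorem gaussHermite_stationaryGG {N : ℕ} (hN : 1 ≤ N) (x β : Fin N → ℝ)
    (hx : StrictMono x)
    (hmom : ∀ m : ℕ, m ≤ 2 * N - 1 →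
      ∑ i, β i * x i ^ m = ∫ y, y ^ m ∂(gaussianReal 0 1)) :
    StationaryGG (fun y => -y) (fun _ => 1) (Real.sqrt 2) x β := by
  classical
  intro i
  have hinj := hx.injective
  have hne : ∀ {a b : Fin N}, a ≠ b → x a - x b ≠ 0 :=
    fun hab => sub_ne_zero.mpr fun h => hab (hinj h)
  set s : Finset (Fin N) := Finset.univ.erase i with hs
  have hcard : s.card = N - 1 := by
    rw [hs, Finset.card_erase_of_mem (Finset.mem_univ i), Finset.card_univ, Fintype.card_fin]
  have hmem : ∀ {k}, k ∈ s → k ≠ i := fun hk => (Finset.mem_erase.1 hk).1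
  set P : Polynomial ℝ := ∏ k ∈ s, (X - C (x k)) with hP
  set c : ℝ := ∏ k ∈ s, (x i - x k) with hc
  have hc0 : c ≠ 0 := by
    rw [hc]
    exact Finset.prod_ne_zero_iff.2 fun k hk => hne (Ne.symm (hmem hk))
  have hprod_er : ∀ (t : Finset (Fin N)) (k : Fin N), k ∈ t → k ≠ i →
      ∏ l ∈ t.erase k, (x i - x l) = (∏ l ∈ t, (x i - x l)) * (1 / (x i - x k)) := by
    intro t k hk hki
    rw [mul_one_div, eq_div_iff (hne (Ne.symm hki)), mul_comm]
    exact Finset.mul_prod_erase t (fun l => x i - x l) hk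
  have hPe : ∀ t : ℝ, P.eval t = ∏ k ∈ s, (t - x k) := by
    intro t
    rw [hP, Polynomial.eval_prod]
    simp
  have hPi : P.eval (x i) = c := by rw [hPe, hc]
  have hPj : ∀ j ∈ s, P.eval (x j) = 0 := fun j hj => by
    rw [hPe]; exact Finset.prod_eq_zero hj (sub_self _)
  have hD : derivative P = ∑ k ∈ s, ∏ l ∈ s.erase k, (X - C (x l)) := by
    rw [hP]; exact GGaux.deriv_prod_linear s x
  have hDe : ∀ t : ℝ, (derivative P).eval t = ∑ k ∈ s, ∏ l ∈ s.erase k, (t - x l) := by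
    intro t
    rw [hD, Polynomial.eval_finset_sum]
    refine Finset.sum_congr rfl fun k _ => ?_
    rw [Polynomial.eval_prod]; simp
  have hDi : (derivative P).eval (x i) = c * lpDiag x i := by
    rw [hDe]
    simp only [lpDiag]
    rw [← hs, Finset.mul_sum]
    refine Finset.sum_congr rfl fun k hk => ?_
    rw [hprod_er s k hk (hmem hk), ← hc]
  have hD2 : derivative (derivative P)
      = ∑ k ∈ s, ∑ l ∈ s.erase k, ∏ m ∈ (s.erase k).erase l, (X - C (x m)) := by
    rw [hD, Polynomial.derivative_sum]
    exact Finset.sum_congr rfl fun k _ => GGaux.deriv_prod_linear (s.erase k) x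
  have hD2i : (derivative (derivative P)).eval (x i) = c * lppDiag x i := by
    rw [hD2, Polynomial.eval_finset_sum]
    have step : ∀ k ∈ s, (∑ l ∈ s.erase k, ∏ m ∈ (s.erase k).erase l,
        (X - C (x m))).eval (x i)
        = (c * (1 / (x i - x k))) * (lpDiag x i - 1 / (x i - x k)) := by
      intro k hk
      rw [Polynomial.eval_finset_sum]
      have h1 : ∀ l ∈ s.erase k, (∏ m ∈ (s.erase k).erase l,
          (X - C (x m))).eval (x i)
          = (c * (1 / (x i - x k))) * (1 / (x i - x l)) := by
        intro l hl
        have hle : (∏ m ∈ (s.erase k).erase l, (X - C (x m))).eval (x i)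
            = ∏ m ∈ (s.erase k).erase l, (x i - x m) := by
          rw [Polynomial.eval_prod]; simp
        rw [hle, hprod_er (s.erase k) l hl (hmem (Finset.mem_of_mem_erase hl)),
          hprod_er s k hk (hmem hk), ← hc]
      rw [Finset.sum_congr rfl h1, ← Finset.mul_sum]
      congr 1
      have hadd := Finset.add_sum_erase s (fun l => 1 / (x i - x l)) hk
      simp only [lpDiag]
      rw [← hs]
      linarith [hadd]
    rw [Finset.sum_congr rfl step]
    have expand : ∀ k ∈ s, (c * (1 / (x i - x k))) * (lpDiag x i - 1 / (x i - x k))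
        = c * lpDiag x i * (1 / (x i - x k)) - c * (1 / (x i - x k) ^ 2) := by
      intro k _
      simp only [one_div]
      rw [← inv_pow]
      ring
    rw [Finset.sum_congr rfl expand, Finset.sum_sub_distrib, ← Finset.mul_sum, ← Finset.mul_sum]
    simp only [lppDiag, lpDiag]
    rw [← hs]
    ring
  have hDj : ∀ j ∈ s, (derivative P).eval (x j) = ∏ l ∈ s.erase j, (x j - x l) := by
    intro j hj
    rw [hDe]
    refine Finset.sum_eq_single_of_mem j hj fun k hk hkj => ?_
    exact Finset.prod_eq_zero (Finset.mem_erase.2 ⟨Ne.symm hkj, hj⟩) (sub_self _)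
  have hw : ∀ j ∈ s, (x j - x i) * ∏ l ∈ s.erase j, (x j - x l)
      = ∏ k ∈ Finset.univ.erase j, (x j - x k) := by
    intro j hj
    have hi' : i ∈ Finset.univ.erase j :=
      Finset.mem_erase.2 ⟨Ne.symm (hmem hj), Finset.mem_univ i⟩
    have h2 := Finset.mul_prod_erase (Finset.univ.erase j) (fun k => x j - x k) hi'
    rw [Finset.erase_right_comm, ← hs] at h2
    exact h2
  have hT : ∀ j ∈ s, (derivative P).eval (x j) = c * lpOff x i j := by
    intro j hj
    have hji : x j - x i ≠ 0 := hne (hmem hj)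
    rw [hDj j hj]
    simp only [lpOff]
    rw [← hs, ← hc, ← hw j hj]
    field_simp
  have hdegP : P.natDegree ≤ N - 1 := by
    calc P.natDegree ≤ ∑ k ∈ s, (X - C (x k)).natDegree := by
          rw [hP]; exact Polynomial.natDegree_prod_le s _
      _ = ∑ _k ∈ s, 1 := Finset.sum_congr rfl fun k _ => Polynomial.natDegree_X_sub_C (x k)
      _ = s.card := by simp
      _ = N - 1 := hcard
  have hdegP2 : (P ^ 2).natDegree ≤ 2 * N - 2 :=
    Polynomial.natDegree_pow_le.trans (by omega)
  -- derivative formulas for P^2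
  have hQ1 : derivative (P ^ 2) = C 2 * (P * derivative P) := by
    rw [Polynomial.derivative_pow]
    norm_num
    ring
  have hQ2 : derivative (derivative (P ^ 2))
      = C 2 * (derivative P * derivative P + P * derivative (derivative P)) := by
    rw [hQ1]
    simp only [Polynomial.derivative_mul, Polynomial.derivative_C, zero_mul, zero_add]
  have hW1i : (derivative (P ^ 2)).eval (x i) = 2 * c ^ 2 * lpDiag x i := by
    rw [hQ1]
    simp only [Polynomial.eval_mul, Polynomial.eval_C]
    rw [hPi, hDi]; ring
  have hW2i : (derivative (derivative (P ^ 2))).eval (x i)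
      = 2 * c ^ 2 * ((lpDiag x i) ^ 2 + lppDiag x i) := by
    rw [hQ2]
    simp only [Polynomial.eval_mul, Polynomial.eval_add, Polynomial.eval_C]
    rw [hPi, hDi, hD2i]; ring
  have hW1j : ∀ j ∈ s, (derivative (P ^ 2)).eval (x j) = 0 := by
    intro j hj
    rw [hQ1]
    simp only [Polynomial.eval_mul, Polynomial.eval_C]
    rw [hPj j hj]; ring
  have hW2j : ∀ j ∈ s, (derivative (derivative (P ^ 2))).eval (x j)
      = (2 * c ^ 2) * (lpOff x i j) ^ 2 := by
    intro j hj
    rw [hQ2]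
    simp only [Polynomial.eval_mul, Polynomial.eval_add, Polynomial.eval_C]
    rw [hPj j hj, hT j hj]; ring
  -- the drift polynomial G = (X - x i) * P^2
  set G : Polynomial ℝ := (X - C (x i)) * P ^ 2 with hG
  have hG1 : derivative G = P ^ 2 + (X - C (x i)) * derivative (P ^ 2) := by
    rw [hG]
    simp only [Polynomial.derivative_mul, Polynomial.derivative_X_sub_C, one_mul]
  have hG2 : derivative (derivative G)
      = derivative (P ^ 2) + (derivative (P ^ 2)
        + (X - C (x i)) * derivative (derivative (P ^ 2))) := by
    rw [hG1]
    simp only [Polynomial.derivative_add, Polynomial.derivative_mul,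
      Polynomial.derivative_X_sub_C, one_mul]
  have hV1i : (derivative G).eval (x i) = c ^ 2 := by
    rw [hG1]
    simp only [Polynomial.eval_add, Polynomial.eval_mul, Polynomial.eval_sub,
      Polynomial.eval_X, Polynomial.eval_C, Polynomial.eval_pow]
    rw [hPi]; ring
  have hV2i : (derivative (derivative G)).eval (x i) = 4 * c ^ 2 * lpDiag x i := by
    rw [hG2]
    simp only [Polynomial.eval_add, Polynomial.eval_mul, Polynomial.eval_sub,
      Polynomial.eval_X, Polynomial.eval_C]
    rw [hW1i]; ring
  have hV1j : ∀ j ∈ s, (derivative G).eval (x j) = 0 := by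
    intro j hj
    rw [hG1]
    simp only [Polynomial.eval_add, Polynomial.eval_mul, Polynomial.eval_sub,
      Polynomial.eval_X, Polynomial.eval_C, Polynomial.eval_pow]
    rw [hPj j hj, hW1j j hj]; ring
  have hV2j : ∀ j ∈ s, (derivative (derivative G)).eval (x j)
      = (x j - x i) * ((2 * c ^ 2) * (lpOff x i j) ^ 2) := by
    intro j hj
    rw [hG2]
    simp only [Polynomial.eval_add, Polynomial.eval_mul, Polynomial.eval_sub,
      Polynomial.eval_X, Polynomial.eval_C]
    rw [hW1j j hj, hW2j j hj]; ring
  have hsq2 : (Real.sqrt 2) ^ 2 = 2 := Real.sq_sqrt (by norm_num)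
  constructor
  · -- drift equation
    show (0:ℝ) = ggDriftRHS (fun k => -(x k)) (fun _ => 1) (Real.sqrt 2) x β i
    have hdegG : (derivative G).natDegree + 2 ≤ 2 * N := by
      have h1 : G.natDegree ≤ 1 + (2 * N - 2) := by
        rw [hG]
        exact Polynomial.natDegree_mul_le.trans
          (add_le_add (Polynomial.natDegree_X_sub_C (x i)).le hdegP2)
      have h2 := Polynomial.natDegree_derivative_le G
      omega
    have h0 := GGaux.quad_zero hN x β hmom (derivative G) hdegG
    have hsplit : ∑ j, β j * ((derivative (derivative G)).eval (x j)
        - x j * (derivative G).eval (x j))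
        = c ^ 2 * ggDriftRHS (fun k => -(x k)) (fun _ => 1) (Real.sqrt 2) x β i := by
      rw [← Finset.add_sum_erase Finset.univ _ (Finset.mem_univ i), ← hs]
      rw [hV2i, hV1i]
      have e1 : ∀ j ∈ s, β j * ((derivative (derivative G)).eval (x j)
          - x j * (derivative G).eval (x j))
          = (c ^ 2 * 2) * (β j * (x j - x i) * (lpOff x i j) ^ 2) := by
        intro j hj
        rw [hV2j j hj, hV1j j hj]; ring
      rw [Finset.sum_congr rfl e1, ← Finset.mul_sum]
      simp only [ggDriftRHS, hsq2, one_pow, mul_one, ← hs]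
      ring
    rw [hsplit] at h0
    exact ((mul_eq_zero.1 h0).resolve_left (pow_ne_zero 2 hc0)).symm
  · -- weight equation
    show (0:ℝ) = ggWeightRHS (fun k => -(x k)) (fun _ => 1) (Real.sqrt 2) x β i
    have hdegW : (derivative (P ^ 2)).natDegree + 2 ≤ 2 * N := by
      have h2 := Polynomial.natDegree_derivative_le (P ^ 2)
      omega
    have h0 := GGaux.quad_zero hN x β hmom (derivative (P ^ 2)) hdegW
    have hsplit : ∑ j, β j * ((derivative (derivative (P ^ 2))).eval (x j)
        - x j * (derivative (P ^ 2)).eval (x j))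
        = c ^ 2 * ggWeightRHS (fun k => -(x k)) (fun _ => 1) (Real.sqrt 2) x β i := by
      rw [← Finset.add_sum_erase Finset.univ _ (Finset.mem_univ i), ← hs]
      rw [hW2i, hW1i]
      have e1 : ∀ j ∈ s, β j * ((derivative (derivative (P ^ 2))).eval (x j)
          - x j * (derivative (P ^ 2)).eval (x j))
          = (c ^ 2 * 2) * (β j * (lpOff x i j) ^ 2) := by
        intro j hj
        rw [hW2j j hj, hW1j j hj]; ring
      rw [Finset.sum_congr rfl e1, ← Finset.mul_sum]
      simp only [ggWeightRHS, hsq2, one_pow, mul_one, ← hs]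
      ring
    rw [hsplit] at h0
    exact ((mul_eq_zero.1 h0).resolve_left (pow_ne_zero 2 hc0)).symm
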